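/- Let α ∈ (0,1), let k be a nonzero integer, let c₀, c₁ ∈ ℂ, and let φ : (0,∞) → ℂ satisfy φ(x) = o(x^{3/2}) as x → 0⁺. Set g = φ + c₁·Ψ_{α,k} + c₀·Φ_{α,k}, g₀ = c₀·√(π(1+α)/(2|k|)) and g₁ = c₁·√(2|k|/(π(1+α)³))·‖Φ_{α,k}‖²_{L²(0,∞)} − c₀·√(π|k|/(2(1+α))). Then lim_{x→0⁺} x^{α/2}·g(x) = g₀, lim_{x→0⁺} x^{−(1+α/2)}·(g(x) − g₀·x^{−α/2}) = g₁, and g(x) = g₀·x^{−α/2} + g₁·x^{1+α/2} + o(x^{3/2}) as x → 0⁺. -/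

import Mathlib

open MeasureTheory Filter Topology Asymptotics
open Set

/-- The function `Φ_{α,k}(x) = √(π(1+α)/(2|k|)) · x^{−α/2} · exp(−|k|x^{1+α}/(1+α))`. -/
noncomputable def PhiG (α : ℝ) (k : ℤ) (x : ℝ) : ℝ :=
  Real.sqrt (Real.pi * (1 + α) / (2 * |(k : ℝ)|)) * x ^ (-(α / 2)) *
    Real.exp (-(|(k : ℝ)| * x ^ (1 + α) / (1 + α)))

/-- The function `F_{α,k}(x) = √(2(1+α)/(π|k|)) · x^{−α/2} · sinh(|k|x^{1+α}/(1+α))`. -/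
noncomputable def FG (α : ℝ) (k : ℤ) (x : ℝ) : ℝ :=
  Real.sqrt (2 * (1 + α) / (Real.pi * |(k : ℝ)|)) * x ^ (-(α / 2)) *
    Real.sinh (|(k : ℝ)| * x ^ (1 + α) / (1 + α))

/-- The Green kernel `G_{α,k}(r,ρ)`, equal to `(1+α)⁻¹ Φ_{α,k}(r) F_{α,k}(ρ)` for `ρ < r`
and to `(1+α)⁻¹ F_{α,k}(r) Φ_{α,k}(ρ)` for `r ≤ ρ`. -/
noncomputable def GreenG (α : ℝ) (k : ℤ) (r ρ : ℝ) : ℝ :=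
  if ρ < r then (1 + α)⁻¹ * PhiG α k r * FG α k ρ else (1 + α)⁻¹ * FG α k r * PhiG α k ρ

/-- The function `Ψ_{α,k}(x) = ∫₀^∞ G_{α,k}(x,ρ) Φ_{α,k}(ρ) dρ`. -/
noncomputable def PsiG (α : ℝ) (k : ℤ) (x : ℝ) : ℝ :=
  ∫ ρ in Set.Ioi (0 : ℝ), GreenG α k x ρ * PhiG α k ρ

lemma aux_tendsto_rpow_zero {c : ℝ} (hc : 0 < c) :
    Tendsto (fun x : ℝ => x ^ c) (𝓝[>] 0) (𝓝 0) := by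
  have h := (Real.continuousAt_rpow_const 0 c (Or.inr hc.le)).continuousWithinAt
      (s := Set.Ioi (0:ℝ))
  simpa [ContinuousWithinAt, Real.zero_rpow hc.ne'] using h

lemma aux_rpow_littleO {p q : ℝ} (h : q < p) :
    (fun x : ℝ => x ^ p) =o[𝓝[>] (0:ℝ)] fun x => x ^ q := by
  rw [isLittleO_iff_tendsto']
  · have he : ∀ᶠ x in 𝓝[>] (0:ℝ), x ^ (p - q) = x ^ p / x ^ q := by
      filter_upwards [self_mem_nhdsWithin] with x hx
      rw [Real.rpow_sub hx]
    exact Tendsto.congr' he (aux_tendsto_rpow_zero (by linarith))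
  · filter_upwards [self_mem_nhdsWithin] with x hx h0
    exact absurd h0 (Real.rpow_pos_of_pos hx q).ne'

lemma aux_sinh_taylor {u : ℝ} (h0 : 0 ≤ u) (h1 : u ≤ 1) : |Real.sinh u - u| ≤ u ^ 2 := by
  have hu : |u| ≤ 1 := by rwa [abs_of_nonneg h0]
  have hu' : |(-u)| ≤ 1 := by rwa [abs_neg]
  have e1 := Real.abs_exp_sub_one_sub_id_le hu
  have e2 := Real.abs_exp_sub_one_sub_id_le hu'
  have : Real.sinh u - u = ((Real.exp u - 1 - u) - (Real.exp (-u) - 1 - (-u))) / 2 := by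
    rw [Real.sinh_eq]; ring
  have e2' : |Real.exp (-u) - 1 - (-u)| ≤ u ^ 2 := by simpa using e2
  have habs : |(Real.exp u - 1 - u) - (Real.exp (-u) - 1 - (-u))| ≤
      |Real.exp u - 1 - u| + |Real.exp (-u) - 1 - (-u)| := abs_sub _ _
  rw [this, abs_div, abs_of_nonneg (by norm_num : (0:ℝ) ≤ 2)]
  linarith

lemma aux_exp_taylor {u : ℝ} (h0 : 0 ≤ u) (h1 : u ≤ 1) : |Real.exp (-u) - 1 + u| ≤ u ^ 2 := by
  have hu' : |(-u)| ≤ 1 := by rwa [abs_neg, abs_of_nonneg h0]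
  have e2 := Real.abs_exp_sub_one_sub_id_le hu'
  simpa [sub_neg_eq_add] using e2


noncomputable def CPhi (α : ℝ) (k : ℤ) : ℝ := Real.sqrt (Real.pi * (1 + α) / (2 * |(k : ℝ)|))
noncomputable def CFg (α : ℝ) (k : ℤ) : ℝ := Real.sqrt (2 * (1 + α) / (Real.pi * |(k : ℝ)|))

lemma aux_measurable_PhiG (α : ℝ) (k : ℤ) : Measurable (PhiG α k) := by
  unfold PhiG; fun_prop

lemma aux_measurable_FG (α : ℝ) (k : ℤ) : Measurable (FG α k) := by
  unfold FG; fun_prop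

lemma aux_PhiG_nonneg (α : ℝ) (k : ℤ) {x : ℝ} (hx : 0 < x) : 0 ≤ PhiG α k x := by
  unfold PhiG
  positivity

lemma aux_FG_nonneg (α : ℝ) (hα : 0 < α) (k : ℤ) {x : ℝ} (hx : 0 < x) : 0 ≤ FG α k x := by
  unfold FG
  have h : 0 ≤ Real.sinh (|(k:ℝ)| * x ^ (1+α) / (1+α)) := by
    rw [Real.sinh_nonneg_iff]
    positivity
  have h2 : (0:ℝ) ≤ x ^ (-(α/2)) := (Real.rpow_pos_of_pos hx _).le
  positivity

lemma aux_PhiG_le (α : ℝ) (hα : 0 < α) (k : ℤ) {x : ℝ} (hx : 0 < x) :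
    PhiG α k x ≤ CPhi α k * x ^ (-(α / 2)) := by
  unfold PhiG CPhi
  have he : Real.exp (-(|(k:ℝ)| * x ^ (1+α) / (1+α))) ≤ 1 := by
    apply Real.exp_le_one_iff.mpr
    have : (0:ℝ) ≤ |(k:ℝ)| * x ^ (1+α) / (1+α) := by positivity
    linarith
  exact mul_le_of_le_one_right (by positivity) he

lemma aux_sinh_mul_exp_le (u : ℝ) : Real.sinh u * Real.exp (-u) ≤ u := by
  have h1 : Real.exp u * Real.exp (-u) = 1 := by rw [← Real.exp_add]; simp
  have h2 : Real.exp (-u) * Real.exp (-u) = Real.exp (-(2*u)) := by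
    rw [← Real.exp_add]; ring_nf
  have h3 := Real.add_one_le_exp (-(2*u))
  rw [Real.sinh_eq]
  nlinarith [Real.exp_pos (-u)]

lemma aux_FG_mul_PhiG_le (α : ℝ) (hα : 0 < α) (k : ℤ) {x : ℝ} (hx : 0 < x) :
    FG α k x * PhiG α k x ≤ CFg α k * CPhi α k * (|(k:ℝ)| / (1+α)) * x := by
  unfold FG PhiG CFg CPhi
  set u := |(k:ℝ)| * x ^ (1+α) / (1+α) with hu
  have hrw : x ^ (-(α/2)) * x ^ (-(α/2)) = x ^ (-α) := by
    rw [← Real.rpow_add hx]; congr 1; ring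
  have hxa : x ^ (-α) * x ^ (1+α) = x := by
    rw [← Real.rpow_add hx]; norm_num
  have hse : Real.sinh u * Real.exp (-u) ≤ u := aux_sinh_mul_exp_le u
  have hxna : (0:ℝ) < x ^ (-α) := Real.rpow_pos_of_pos hx _
  calc Real.sqrt (2*(1+α)/(Real.pi*|(k:ℝ)|)) * x ^ (-(α/2)) * Real.sinh u *
        (Real.sqrt (Real.pi*(1+α)/(2*|(k:ℝ)|)) * x ^ (-(α/2)) * Real.exp (-u))
      = Real.sqrt (2*(1+α)/(Real.pi*|(k:ℝ)|)) * Real.sqrt (Real.pi*(1+α)/(2*|(k:ℝ)|)) *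
          (x ^ (-α)) * (Real.sinh u * Real.exp (-u)) := by
        rw [← hrw]; ring
    _ ≤ Real.sqrt (2*(1+α)/(Real.pi*|(k:ℝ)|)) * Real.sqrt (Real.pi*(1+α)/(2*|(k:ℝ)|)) *
          (x ^ (-α)) * u := by
        gcongr
    _ = Real.sqrt (2*(1+α)/(Real.pi*|(k:ℝ)|)) * Real.sqrt (Real.pi*(1+α)/(2*|(k:ℝ)|)) *
          (x ^ (-α) * u) := by ring
    _ = Real.sqrt (2*(1+α)/(Real.pi*|(k:ℝ)|)) * Real.sqrt (Real.pi*(1+α)/(2*|(k:ℝ)|)) *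
          (|(k:ℝ)|/(1+α) * x) := by
        congr 1
        calc x ^ (-α) * u = (x ^ (-α) * x ^ (1+α)) * (|(k:ℝ)|/(1+α)) := by rw [hu]; ring
          _ = |(k:ℝ)|/(1+α) * x := by rw [hxa]; ring
    _ = Real.sqrt (2*(1+α)/(Real.pi*|(k:ℝ)|)) * Real.sqrt (Real.pi*(1+α)/(2*|(k:ℝ)|)) *
          (|(k:ℝ)|/(1+α)) * x := by ring

lemma aux_PhiG_sq_eq (α : ℝ) (k : ℤ) {x : ℝ} (hx : 0 < x) :
    PhiG α k x ^ 2 = CPhi α k ^ 2 * x ^ (-α) *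
      Real.exp (-(2 * (|(k:ℝ)| * x ^ (1+α) / (1+α)))) := by
  unfold PhiG CPhi
  have hrw : x ^ (-(α/2)) * x ^ (-(α/2)) = x ^ (-α) := by
    rw [← Real.rpow_add hx]; congr 1; ring
  have he : Real.exp (-(|(k:ℝ)| * x ^ (1+α)/(1+α))) * Real.exp (-(|(k:ℝ)| * x ^ (1+α)/(1+α)))
      = Real.exp (-(2 * (|(k:ℝ)| * x ^ (1+α)/(1+α)))) := by
    rw [← Real.exp_add]; congr 1; ring
  rw [← hrw, ← he]; ring

lemma aux_PhiG_sq_le (α : ℝ) (hα : 0 < α) (k : ℤ) {x : ℝ} (hx : 0 < x) :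
    PhiG α k x ^ 2 ≤ CPhi α k ^ 2 * x ^ (-α) := by
  rw [aux_PhiG_sq_eq α k hx]
  apply mul_le_of_le_one_right (by positivity)
  apply Real.exp_le_one_iff.mpr
  have : (0:ℝ) ≤ 2 * (|(k:ℝ)| * x ^ (1+α) / (1+α)) := by positivity
  linarith

lemma aux_integrableOn_PhiG_sq (α : ℝ) (hα0 : 0 < α) (hα1 : α < 1) (k : ℤ) (hk : k ≠ 0) :
    IntegrableOn (fun ρ => PhiG α k ρ ^ 2) (Set.Ioi (0:ℝ)) := by
  have hK : (0:ℝ) < |(k:ℝ)| := by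
    simp only [abs_pos, ne_eq, Int.cast_eq_zero]; exact hk
  have hmeas : Measurable fun ρ => PhiG α k ρ ^ 2 := (aux_measurable_PhiG α k).pow_const 2
  rw [← Set.Ioc_union_Ioi_eq_Ioi (zero_le_one (α := ℝ))]
  apply IntegrableOn.union
  · -- on Ioc 0 1
    have hint : IntegrableOn (fun ρ : ℝ => CPhi α k ^ 2 * ρ ^ (-α)) (Set.Ioc (0:ℝ) 1) :=
      ((intervalIntegrable_iff_integrableOn_Ioc_of_le zero_le_one).mp
        (intervalIntegral.intervalIntegrable_rpow' (by linarith))).const_mul _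
    apply Integrable.mono' hint (hmeas.aestronglyMeasurable.restrict)
    filter_upwards [ae_restrict_mem measurableSet_Ioc] with ρ hρ
    rw [Real.norm_eq_abs, abs_of_nonneg (sq_nonneg _)]
    exact aux_PhiG_sq_le α hα0 k hρ.1
  · -- on Ioi 1
    have hb : (0:ℝ) < 2 * |(k:ℝ)| / (1 + α) := by positivity
    have hint : IntegrableOn (fun ρ : ℝ => CPhi α k ^ 2 *
        Real.exp (-(2 * |(k:ℝ)| / (1 + α)) * ρ)) (Set.Ioi (1:ℝ)) :=
      (exp_neg_integrableOn_Ioi 1 hb).const_mul _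
    apply Integrable.mono' hint (hmeas.aestronglyMeasurable.restrict)
    filter_upwards [ae_restrict_mem measurableSet_Ioi] with ρ hρ
    have hρ0 : (0:ℝ) < ρ := lt_trans one_pos hρ
    rw [Real.norm_eq_abs, abs_of_nonneg (sq_nonneg _), aux_PhiG_sq_eq α k hρ0]
    have h1 : ρ ^ (-α) ≤ 1 := Real.rpow_le_one_of_one_le_of_nonpos hρ.le (by linarith)
    have h2 : ρ ≤ ρ ^ (1 + α) := by
      have := Real.rpow_le_rpow_of_exponent_le hρ.le (by linarith : (1:ℝ) ≤ 1 + α)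
      simpa using this
    have h3 : Real.exp (-(2 * (|(k:ℝ)| * ρ ^ (1+α) / (1+α)))) ≤
        Real.exp (-(2 * |(k:ℝ)| / (1 + α)) * ρ) := by
      apply Real.exp_le_exp.mpr
      rw [neg_mul]
      apply neg_le_neg
      rw [div_mul_eq_mul_div, mul_comm (2 * |(k:ℝ)|) ρ, ← mul_div_assoc]
      apply div_le_div_of_nonneg_right ?_ (by linarith) |>.trans_eq rfl
      nlinarith [abs_nonneg ((k:ℝ))]
    calc CPhi α k ^ 2 * ρ ^ (-α) * Real.exp (-(2 * (|(k:ℝ)| * ρ ^ (1+α) / (1+α))))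
        ≤ CPhi α k ^ 2 * 1 * Real.exp (-(2 * |(k:ℝ)| / (1 + α)) * ρ) := by
          apply mul_le_mul ?_ h3 (Real.exp_pos _).le (by positivity)
          apply mul_le_mul_of_nonneg_left h1 (by positivity)
      _ = CPhi α k ^ 2 * Real.exp (-(2 * |(k:ℝ)| / (1 + α)) * ρ) := by ring

lemma aux_integrableOn_FGPhiG (α : ℝ) (hα0 : 0 < α) (k : ℤ) {x : ℝ} (hx : 0 < x) :
    IntegrableOn (fun ρ => FG α k ρ * PhiG α k ρ) (Set.Ioo (0:ℝ) x) := by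
  set M := CFg α k * CPhi α k * (|(k:ℝ)| / (1+α)) with hM
  have hM0 : 0 ≤ M := by
    rw [hM]; unfold CFg CPhi; positivity
  apply Integrable.mono' (g := fun _ : ℝ => M * x)
    (integrableOn_const (by simp [Real.volume_Ioo]))
    (((aux_measurable_FG α k).mul (aux_measurable_PhiG α k)).aestronglyMeasurable.restrict)
  filter_upwards [ae_restrict_mem measurableSet_Ioo] with ρ hρ
  rw [Real.norm_eq_abs, Pi.mul_apply, abs_of_nonneg (mul_nonneg (aux_FG_nonneg α hα0 k hρ.1)
    (aux_PhiG_nonneg α k hρ.1))]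
  calc FG α k ρ * PhiG α k ρ ≤ M * ρ := aux_FG_mul_PhiG_le α hα0 k hρ.1
    _ ≤ M * x := by apply mul_le_mul_of_nonneg_left hρ.2.le hM0

lemma aux_PsiG_eq (α : ℝ) (hα0 : 0 < α) (hα1 : α < 1) (k : ℤ) (hk : k ≠ 0)
    {x : ℝ} (hx : 0 < x) :
    PsiG α k x = (1+α)⁻¹ * FG α k x * (∫ ρ in Set.Ici x, PhiG α k ρ ^ 2)
      + (1+α)⁻¹ * PhiG α k x * (∫ ρ in Set.Ioo 0 x, FG α k ρ * PhiG α k ρ) := by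
  have hgreen_meas : Measurable fun ρ => GreenG α k x ρ * PhiG α k ρ := by
    apply Measurable.mul ?_ (aux_measurable_PhiG α k)
    unfold GreenG
    exact Measurable.ite (measurableSet_Iio)
      (measurable_const.mul (aux_measurable_FG α k))
      (measurable_const.mul (aux_measurable_PhiG α k))
  have h1 : IntegrableOn (fun ρ => GreenG α k x ρ * PhiG α k ρ) (Set.Ioo 0 x) := by
    apply IntegrableOn.congr_fun (f := fun ρ => (1+α)⁻¹ * PhiG α k x * (FG α k ρ * PhiG α k ρ))
    · exact ((aux_integrableOn_FGPhiG α hα0 k hx).const_mul _)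
    · intro ρ hρ
      simp only [GreenG, if_pos hρ.2]
      ring
    · exact measurableSet_Ioo
  have h2 : IntegrableOn (fun ρ => GreenG α k x ρ * PhiG α k ρ) (Set.Ici x) := by
    apply IntegrableOn.congr_fun (f := fun ρ => (1+α)⁻¹ * FG α k x * PhiG α k ρ ^ 2)
    · exact (((aux_integrableOn_PhiG_sq α hα0 hα1 k hk).mono_set
        (Set.Ici_subset_Ioi.mpr hx)).const_mul _)
    · intro ρ hρ
      simp only [GreenG, if_neg (not_lt.mpr (Set.mem_Ici.mp hρ))]
      ring
    · exact measurableSet_Ici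
  unfold PsiG
  rw [← Set.Ioo_union_Ici_eq_Ioi hx,
    setIntegral_union ((Set.Iio_disjoint_Ici le_rfl).mono_left Set.Ioo_subset_Iio_self) measurableSet_Ici h1 h2]
  rw [setIntegral_congr_fun measurableSet_Ioo
      (g := fun ρ => (1+α)⁻¹ * PhiG α k x * (FG α k ρ * PhiG α k ρ))
      (fun ρ hρ => by simp only [GreenG, if_pos hρ.2]; ring),
    setIntegral_congr_fun measurableSet_Ici
      (g := fun ρ => (1+α)⁻¹ * FG α k x * PhiG α k ρ ^ 2)
      (fun ρ hρ => by simp only [GreenG, if_neg (not_lt.mpr (Set.mem_Ici.mp hρ))]; ring),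
    integral_const_mul, integral_const_mul]
  ring

lemma aux_J_bound (α : ℝ) (hα0 : 0 < α) (k : ℤ) {x : ℝ} (hx : 0 < x) :
    |∫ ρ in Set.Ioo (0:ℝ) x, FG α k ρ * PhiG α k ρ| ≤
      (CFg α k * CPhi α k * (|(k:ℝ)| / (1+α))) * x ^ 2 := by
  set M := CFg α k * CPhi α k * (|(k:ℝ)| / (1+α)) with hM
  have hM0 : 0 ≤ M := by rw [hM]; unfold CFg CPhi; positivity
  have h := norm_setIntegral_le_of_norm_le_const_ae' (μ := volume)
    (s := Set.Ioo (0:ℝ) x) (C := M * x)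
    (f := fun ρ => FG α k ρ * PhiG α k ρ)
    (by simp [Real.volume_Ioo])
    ?_
  · rw [Real.norm_eq_abs] at h
    calc |∫ ρ in Set.Ioo (0:ℝ) x, FG α k ρ * PhiG α k ρ|
        ≤ M * x * (volume (Set.Ioo (0:ℝ) x)).toReal := h
      _ = M * x ^ 2 := by rw [Real.volume_Ioo, sub_zero, ENNReal.toReal_ofReal hx.le]; ring
  · filter_upwards with ρ hρ
    rw [Real.norm_eq_abs, abs_of_nonneg (mul_nonneg (aux_FG_nonneg α hα0 k hρ.1)
      (aux_PhiG_nonneg α k hρ.1))]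
    calc FG α k ρ * PhiG α k ρ ≤ M * ρ := aux_FG_mul_PhiG_le α hα0 k hρ.1
      _ ≤ M * x := mul_le_mul_of_nonneg_left hρ.2.le hM0

lemma aux_P_bound (α : ℝ) (hα0 : 0 < α) (hα1 : α < 1) (k : ℤ) (hk : k ≠ 0)
    {x : ℝ} (hx : 0 < x) :
    |∫ ρ in Set.Ioo (0:ℝ) x, PhiG α k ρ ^ 2| ≤ CPhi α k ^ 2 / (1 - α) * x ^ (1 - α) := by
  have hint1 : IntegrableOn (fun ρ => PhiG α k ρ ^ 2) (Set.Ioo (0:ℝ) x) :=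
    (aux_integrableOn_PhiG_sq α hα0 hα1 k hk).mono_set Set.Ioo_subset_Ioi_self
  have hint2 : IntegrableOn (fun ρ : ℝ => CPhi α k ^ 2 * ρ ^ (-α)) (Set.Ioo (0:ℝ) x) :=
    (((intervalIntegrable_iff_integrableOn_Ioc_of_le hx.le).mp
      (intervalIntegral.intervalIntegrable_rpow' (by linarith))).mono_set
        Set.Ioo_subset_Ioc_self).const_mul _
  have hP0 : 0 ≤ ∫ ρ in Set.Ioo (0:ℝ) x, PhiG α k ρ ^ 2 :=
    setIntegral_nonneg measurableSet_Ioo (fun ρ _ => sq_nonneg _)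
  rw [abs_of_nonneg hP0]
  have hmono : (∫ ρ in Set.Ioo (0:ℝ) x, PhiG α k ρ ^ 2) ≤
      ∫ ρ in Set.Ioo (0:ℝ) x, CPhi α k ^ 2 * ρ ^ (-α) :=
    setIntegral_mono_on hint1 hint2 measurableSet_Ioo
      (fun ρ hρ => aux_PhiG_sq_le α hα0 k hρ.1)
  have hcomp : (∫ ρ in Set.Ioo (0:ℝ) x, (ρ:ℝ) ^ (-α)) = x ^ (1-α) / (1-α) := by
    rw [← integral_Ioc_eq_integral_Ioo]
    have : (∫ ρ in (0:ℝ)..x, (ρ:ℝ) ^ (-α)) = x ^ (1-α) / (1-α) := by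
      rw [integral_rpow (Or.inl (by linarith)),
        Real.zero_rpow (by intro h; linarith [h] : -α + 1 ≠ 0),
        show -α + 1 = 1 - α by ring, sub_zero]
    rw [← this, intervalIntegral.integral_of_le hx.le]
  calc (∫ ρ in Set.Ioo (0:ℝ) x, PhiG α k ρ ^ 2)
      ≤ ∫ ρ in Set.Ioo (0:ℝ) x, CPhi α k ^ 2 * ρ ^ (-α) := hmono
    _ = CPhi α k ^ 2 * (x ^ (1-α) / (1-α)) := by rw [integral_const_mul, hcomp]
    _ = CPhi α k ^ 2 / (1-α) * x ^ (1-α) := by ring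

lemma aux_Ici_split (α : ℝ) (hα0 : 0 < α) (hα1 : α < 1) (k : ℤ) (hk : k ≠ 0)
    {x : ℝ} (hx : 0 < x) :
    (∫ ρ in Set.Ici x, PhiG α k ρ ^ 2) = (∫ ρ in Set.Ioi (0:ℝ), PhiG α k ρ ^ 2)
      - ∫ ρ in Set.Ioo 0 x, PhiG α k ρ ^ 2 := by
  have h1 : IntegrableOn (fun ρ => PhiG α k ρ ^ 2) (Set.Ioo (0:ℝ) x) :=
    (aux_integrableOn_PhiG_sq α hα0 hα1 k hk).mono_set Set.Ioo_subset_Ioi_self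
  have h2 : IntegrableOn (fun ρ => PhiG α k ρ ^ 2) (Set.Ici x) :=
    (aux_integrableOn_PhiG_sq α hα0 hα1 k hk).mono_set (Set.Ici_subset_Ioi.mpr hx)
  rw [← Set.Ioo_union_Ici_eq_Ioi hx,
    setIntegral_union ((Set.Iio_disjoint_Ici le_rfl).mono_left Set.Ioo_subset_Iio_self)
      measurableSet_Ici h1 h2]
  ring

lemma aux_sqrt_id1 (α : ℝ) (hα0 : 0 < α) (k : ℤ) (hk : k ≠ 0) :
    CPhi α k * (|(k:ℝ)| / (1 + α)) = Real.sqrt (Real.pi * |(k:ℝ)| / (2 * (1 + α))) := by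
  have hK : (0:ℝ) < |(k:ℝ)| := by
    simp only [abs_pos, ne_eq, Int.cast_eq_zero]; exact hk
  unfold CPhi
  have hgen : ∀ K : ℝ, 0 < K → Real.pi * K / (2 * (1 + α)) =
      (Real.pi * (1 + α) / (2 * K)) * (K / (1 + α)) ^ 2 := by
    intro K hK; field_simp
  rw [hgen _ hK, Real.sqrt_mul (by positivity), Real.sqrt_sq (by positivity)]

lemma aux_sqrt_id2 (α : ℝ) (hα0 : 0 < α) (k : ℤ) (hk : k ≠ 0) :
    (1 + α)⁻¹ * CFg α k * (|(k:ℝ)| / (1 + α)) =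
      Real.sqrt (2 * |(k:ℝ)| / (Real.pi * (1 + α) ^ 3)) := by
  have hK : (0:ℝ) < |(k:ℝ)| := by
    simp only [abs_pos, ne_eq, Int.cast_eq_zero]; exact hk
  have hpi := Real.pi_pos
  unfold CFg
  have hgen : ∀ K : ℝ, 0 < K → 2 * K / (Real.pi * (1 + α) ^ 3) =
      (2 * (1 + α) / (Real.pi * K)) * (K / (1 + α) ^ 2) ^ 2 := by
    intro K hK; field_simp
  rw [hgen _ hK, Real.sqrt_mul (by positivity), Real.sqrt_sq (by positivity)]
  field_simp

lemma aux_littleO_of_bound {f : ℝ → ℝ} {C p : ℝ} (hp : 3/2 < p)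
    (h : ∀ᶠ x in 𝓝[>] (0:ℝ), |f x| ≤ C * x ^ p) :
    f =o[𝓝[>] (0:ℝ)] fun x => x ^ ((3:ℝ)/2) := by
  have hO : f =O[𝓝[>] (0:ℝ)] fun x => x ^ p := by
    rw [isBigO_iff]
    refine ⟨C, ?_⟩
    filter_upwards [h, self_mem_nhdsWithin] with x hx hx0
    rw [Real.norm_eq_abs, Real.norm_eq_abs, abs_of_pos (Real.rpow_pos_of_pos hx0 p)]
    exact hx
  exact hO.trans_isLittleO (aux_rpow_littleO hp)

lemma aux_eventually (α : ℝ) (hα0 : 0 < α) (k : ℤ) (hk : k ≠ 0) :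
    ∀ᶠ x in 𝓝[>] (0:ℝ), 0 < x ∧ x ≤ 1 ∧ |(k:ℝ)| * x ^ (1+α) / (1+α) ≤ 1 := by
  have hK : (0:ℝ) < |(k:ℝ)| := by
    simp only [abs_pos, ne_eq, Int.cast_eq_zero]; exact hk
  set δ : ℝ := min 1 ((1+α) / |(k:ℝ)|) with hδ
  have hδ0 : 0 < δ := lt_min one_pos (by positivity)
  filter_upwards [Ioo_mem_nhdsGT hδ0] with x hx
  have hx0 : 0 < x := hx.1
  have hx1 : x ≤ 1 := le_trans hx.2.le (min_le_left _ _)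
  refine ⟨hx0, hx1, ?_⟩
  have hxp : x ^ (1+α) ≤ x := by
    have := Real.rpow_le_rpow_of_exponent_ge hx0 hx1 (by linarith : (1:ℝ) ≤ 1 + α)
    simpa using this
  have hxδ : x ≤ (1+α) / |(k:ℝ)| := le_trans hx.2.le (min_le_right _ _)
  rw [div_le_one (by linarith : (0:ℝ) < 1 + α)]
  calc |(k:ℝ)| * x ^ (1+α) ≤ |(k:ℝ)| * x := by
        exact mul_le_mul_of_nonneg_left hxp hK.le
    _ ≤ |(k:ℝ)| * ((1+α) / |(k:ℝ)|) := mul_le_mul_of_nonneg_left hxδ hK.le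
    _ = 1 + α := by field_simp

lemma aux_phi_asym (α : ℝ) (hα0 : 0 < α) (hα1 : α < 1) (k : ℤ) (hk : k ≠ 0) :
    (fun x : ℝ => PhiG α k x - CPhi α k * x ^ (-(α/2)) +
      Real.sqrt (Real.pi * |(k:ℝ)| / (2*(1+α))) * x ^ (1 + α/2))
      =o[𝓝[>] (0:ℝ)] fun x => x ^ ((3:ℝ)/2) := by
  have hK : (0:ℝ) < |(k:ℝ)| := by
    simp only [abs_pos, ne_eq, Int.cast_eq_zero]; exact hk
  apply aux_littleO_of_bound (C := CPhi α k * (|(k:ℝ)|/(1+α))^2) (p := 2 + 3*α/2)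
    (by linarith)
  filter_upwards [aux_eventually α hα0 k hk] with x hx
  obtain ⟨hx0, hx1, hu1⟩ := hx
  set u : ℝ := |(k:ℝ)| * x ^ (1+α) / (1+α) with hu
  have hu0 : 0 ≤ u := by rw [hu]; positivity
  have hCΦ : 0 ≤ CPhi α k := Real.sqrt_nonneg _
  have hxa : (0:ℝ) < x ^ (-(α/2)) := Real.rpow_pos_of_pos hx0 _
  have step1 : Real.sqrt (Real.pi * |(k:ℝ)| / (2*(1+α))) * x ^ (1 + α/2)
      = CPhi α k * x ^ (-(α/2)) * u := by
    have hpow : x ^ (1 + α/2) = x ^ (-(α/2)) * x ^ (1+α) := by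
      rw [← Real.rpow_add hx0]; congr 1; ring
    rw [← aux_sqrt_id1 α hα0 k hk, hpow, hu]
    ring
  have step2 : PhiG α k x = CPhi α k * x ^ (-(α/2)) * Real.exp (-u) := by
    rw [PhiG, CPhi, hu]
  rw [step1, step2]
  have hrw : CPhi α k * x ^ (-(α/2)) * Real.exp (-u) - CPhi α k * x ^ (-(α/2)) +
      CPhi α k * x ^ (-(α/2)) * u = CPhi α k * x ^ (-(α/2)) * (Real.exp (-u) - 1 + u) := by
    ring
  rw [hrw, abs_mul, abs_of_nonneg (by positivity : (0:ℝ) ≤ CPhi α k * x ^ (-(α/2)))]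
  have htay := aux_exp_taylor hu0 hu1
  have hxx : x ^ (1+α) * x ^ (1+α) = x ^ (2*(1+α)) := by
    rw [← Real.rpow_add hx0]; congr 1; ring
  have husq : u ^ 2 = (|(k:ℝ)|/(1+α))^2 * x ^ (2*(1+α)) := by
    rw [hu, show (|(k:ℝ)| * x ^ (1+α)/(1+α))^2 =
      (|(k:ℝ)|/(1+α))^2 * (x ^ (1+α) * x ^ (1+α)) by ring, hxx]
  calc CPhi α k * x ^ (-(α/2)) * |Real.exp (-u) - 1 + u|
      ≤ CPhi α k * x ^ (-(α/2)) * u ^ 2 := by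
        apply mul_le_mul_of_nonneg_left htay (by positivity)
    _ = CPhi α k * (|(k:ℝ)|/(1+α))^2 * (x ^ (-(α/2)) * x ^ (2*(1+α))) := by
        rw [husq]; ring
    _ = CPhi α k * (|(k:ℝ)|/(1+α))^2 * x ^ (2 + 3*α/2) := by
        rw [← Real.rpow_add hx0, show -(α/2) + 2*(1+α) = 2 + 3*α/2 by ring]

lemma aux_psi_asym (α : ℝ) (hα0 : 0 < α) (hα1 : α < 1) (k : ℤ) (hk : k ≠ 0) :
    (fun x : ℝ => PsiG α k x - Real.sqrt (2*|(k:ℝ)|/(Real.pi*(1+α)^3)) *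
      (∫ ρ in Set.Ioi (0:ℝ), PhiG α k ρ ^ 2) * x ^ (1 + α/2))
      =o[𝓝[>] (0:ℝ)] fun x => x ^ ((3:ℝ)/2) := by
  have hK : (0:ℝ) < |(k:ℝ)| := by
    simp only [abs_pos, ne_eq, Int.cast_eq_zero]; exact hk
  have hA : (0:ℝ) < 1 + α := by linarith
  set I : ℝ := ∫ ρ in Set.Ioi (0:ℝ), PhiG α k ρ ^ 2 with hI
  set c1 : ℝ := (1+α)⁻¹ * CFg α k * (|(k:ℝ)|/(1+α))^2 with hc1
  set c2 : ℝ := 2 * CFg α k * (|(k:ℝ)|/(1+α)) * (1+α)⁻¹ * (CPhi α k ^2 / (1-α)) with hc2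
  set c3 : ℝ := (1+α)⁻¹ * CPhi α k * (CFg α k * CPhi α k * (|(k:ℝ)|/(1+α))) with hc3
  apply aux_littleO_of_bound (C := |I| * c1 + c2 + c3) (p := 2 - α/2) (by linarith)
  filter_upwards [aux_eventually α hα0 k hk] with x hx
  obtain ⟨hx0, hx1, hu1⟩ := hx
  set u : ℝ := |(k:ℝ)| * x ^ (1+α) / (1+α) with hu
  have hu0 : 0 ≤ u := by rw [hu]; positivity
  have hCΦ : 0 ≤ CPhi α k := Real.sqrt_nonneg _
  have hCF : 0 ≤ CFg α k := Real.sqrt_nonneg _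
  have hxa : (0:ℝ) < x ^ (-(α/2)) := Real.rpow_pos_of_pos hx0 _
  have hpow : x ^ (1 + α/2) = x ^ (-(α/2)) * x ^ (1+α) := by
    rw [← Real.rpow_add hx0]; congr 1; ring
  set P : ℝ := ∫ ρ in Set.Ioo (0:ℝ) x, PhiG α k ρ ^ 2 with hP
  set J : ℝ := ∫ ρ in Set.Ioo (0:ℝ) x, FG α k ρ * PhiG α k ρ with hJ
  set B : ℝ := Real.sqrt (2*|(k:ℝ)|/(Real.pi*(1+α)^3)) with hB
  -- decomposition
  have hdec : PsiG α k x - B * I * x ^ (1 + α/2) =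
      I * ((1+α)⁻¹ * FG α k x - B * x ^ (1 + α/2)) - (1+α)⁻¹ * FG α k x * P
        + (1+α)⁻¹ * PhiG α k x * J := by
    rw [aux_PsiG_eq α hα0 hα1 k hk hx0, aux_Ici_split α hα0 hα1 k hk hx0, ← hI, ← hP, ← hJ]
    ring
  rw [hdec]
  -- term 1
  have hT1 : |(1+α)⁻¹ * FG α k x - B * x ^ (1 + α/2)| ≤ c1 * x ^ (2 + 3*α/2) := by
    have hBx : B * x ^ (1 + α/2) = (1+α)⁻¹ * CFg α k * x ^ (-(α/2)) * u := by
      rw [hB, ← aux_sqrt_id2 α hα0 k hk, hpow, hu]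
      ring
    have hFx : (1+α)⁻¹ * FG α k x = (1+α)⁻¹ * CFg α k * x ^ (-(α/2)) * Real.sinh u := by
      rw [FG, CFg, hu]; ring
    rw [hBx, hFx,
      show (1+α)⁻¹ * CFg α k * x ^ (-(α/2)) * Real.sinh u -
        (1+α)⁻¹ * CFg α k * x ^ (-(α/2)) * u =
        (1+α)⁻¹ * CFg α k * x ^ (-(α/2)) * (Real.sinh u - u) by ring,
      abs_mul, abs_of_nonneg (by positivity : (0:ℝ) ≤ (1+α)⁻¹ * CFg α k * x ^ (-(α/2)))]
    have hxx : x ^ (1+α) * x ^ (1+α) = x ^ (2*(1+α)) := by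
      rw [← Real.rpow_add hx0]; congr 1; ring
    have husq : u ^ 2 = (|(k:ℝ)|/(1+α))^2 * x ^ (2*(1+α)) := by
      rw [hu, show (|(k:ℝ)| * x ^ (1+α)/(1+α))^2 =
        (|(k:ℝ)|/(1+α))^2 * (x ^ (1+α) * x ^ (1+α)) by ring, hxx]
    calc (1+α)⁻¹ * CFg α k * x ^ (-(α/2)) * |Real.sinh u - u|
        ≤ (1+α)⁻¹ * CFg α k * x ^ (-(α/2)) * u ^ 2 :=
          mul_le_mul_of_nonneg_left (aux_sinh_taylor hu0 hu1) (by positivity)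
      _ = c1 * (x ^ (-(α/2)) * x ^ (2*(1+α))) := by rw [husq, hc1]; ring
      _ = c1 * x ^ (2 + 3*α/2) := by
          rw [← Real.rpow_add hx0, show -(α/2) + 2*(1+α) = 2 + 3*α/2 by ring]
  -- F bound
  have hFle : FG α k x ≤ 2 * CFg α k * (|(k:ℝ)|/(1+α)) * x ^ (1 + α/2) := by
    have hsinh : Real.sinh u ≤ 2 * u := by
      have h := aux_sinh_taylor hu0 hu1
      have h2 : u^2 ≤ u := by nlinarith
      have := abs_le.mp h
      linarith [this.2]
    have : FG α k x = CFg α k * x ^ (-(α/2)) * Real.sinh u := by rw [FG, CFg, hu]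
    rw [this, hpow, hu]
    calc CFg α k * x ^ (-(α/2)) * Real.sinh u
        ≤ CFg α k * x ^ (-(α/2)) * (2*u) :=
          mul_le_mul_of_nonneg_left hsinh (by positivity)
      _ = 2 * CFg α k * (|(k:ℝ)|/(1+α)) * (x ^ (-(α/2)) * x ^ (1+α)) := by
          rw [hu]; ring
  have hF0 : 0 ≤ FG α k x := aux_FG_nonneg α hα0 k hx0
  -- term 2
  have hT2 : |(1+α)⁻¹ * FG α k x * P| ≤ c2 * (x ^ (1+α/2) * x ^ (1-α)) := by
    rw [abs_mul, abs_of_nonneg (mul_nonneg (by positivity) hF0 :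
      (0:ℝ) ≤ (1+α)⁻¹ * FG α k x)]
    have hPb := aux_P_bound α hα0 hα1 k hk hx0
    calc (1+α)⁻¹ * FG α k x * |P|
        ≤ (1+α)⁻¹ * (2 * CFg α k * (|(k:ℝ)|/(1+α)) * x ^ (1 + α/2)) *
            (CPhi α k ^2/(1-α) * x ^ (1-α)) := by
          apply mul_le_mul ?_ hPb (abs_nonneg _) (by positivity)
          apply mul_le_mul_of_nonneg_left hFle (by positivity)
      _ = c2 * (x ^ (1+α/2) * x ^ (1-α)) := by rw [hc2]; ring
  -- term 3
  have hT3 : |(1+α)⁻¹ * PhiG α k x * J| ≤ c3 * (x ^ (-(α/2)) * x ^ 2) := by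
    rw [abs_mul, abs_of_nonneg (mul_nonneg (by positivity) (aux_PhiG_nonneg α k hx0) :
      (0:ℝ) ≤ (1+α)⁻¹ * PhiG α k x)]
    have hJb := aux_J_bound α hα0 k hx0
    have hΦle := aux_PhiG_le α hα0 k hx0
    calc (1+α)⁻¹ * PhiG α k x * |J|
        ≤ (1+α)⁻¹ * (CPhi α k * x ^ (-(α/2))) *
            (CFg α k * CPhi α k * (|(k:ℝ)|/(1+α)) * x ^ 2) := by
          apply mul_le_mul ?_ hJb (abs_nonneg _) (by positivity)
          apply mul_le_mul_of_nonneg_left hΦle (by positivity)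
      _ = c3 * (x ^ (-(α/2)) * x ^ 2) := by rw [hc3]; ring
  -- combine
  have e1 : x ^ (2 + 3*α/2) ≤ x ^ (2 - α/2) :=
    Real.rpow_le_rpow_of_exponent_ge hx0 hx1 (by linarith)
  have e2 : x ^ (1+α/2) * x ^ (1-α) = x ^ (2 - α/2) := by
    rw [← Real.rpow_add hx0]; congr 1; ring
  have e3 : x ^ (-(α/2)) * x ^ 2 = x ^ (2 - α/2) := by
    rw [show (x:ℝ) ^ (2:ℕ) = x ^ ((2:ℕ):ℝ) by rw [Real.rpow_natCast],
      ← Real.rpow_add hx0]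
    congr 1; ring
  have hc10 : 0 ≤ c1 := by rw [hc1]; positivity
  have habs : |I * ((1+α)⁻¹ * FG α k x - B * x ^ (1 + α/2)) - (1+α)⁻¹ * FG α k x * P
      + (1+α)⁻¹ * PhiG α k x * J| ≤
      |I| * |(1+α)⁻¹ * FG α k x - B * x ^ (1 + α/2)| + |(1+α)⁻¹ * FG α k x * P|
        + |(1+α)⁻¹ * PhiG α k x * J| := by
    calc |I * ((1+α)⁻¹ * FG α k x - B * x ^ (1 + α/2)) - (1+α)⁻¹ * FG α k x * P
        + (1+α)⁻¹ * PhiG α k x * J|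
        ≤ |I * ((1+α)⁻¹ * FG α k x - B * x ^ (1 + α/2)) - (1+α)⁻¹ * FG α k x * P|
          + |(1+α)⁻¹ * PhiG α k x * J| := abs_add_le _ _
      _ ≤ |I * ((1+α)⁻¹ * FG α k x - B * x ^ (1 + α/2))| + |(1+α)⁻¹ * FG α k x * P|
          + |(1+α)⁻¹ * PhiG α k x * J| := by
            have := abs_sub (I * ((1+α)⁻¹ * FG α k x - B * x ^ (1 + α/2)))
              ((1+α)⁻¹ * FG α k x * P)
            linarith
      _ = |I| * |(1+α)⁻¹ * FG α k x - B * x ^ (1 + α/2)| + |(1+α)⁻¹ * FG α k x * P|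
          + |(1+α)⁻¹ * PhiG α k x * J| := by rw [abs_mul]
  calc |I * ((1+α)⁻¹ * FG α k x - B * x ^ (1 + α/2)) - (1+α)⁻¹ * FG α k x * P
      + (1+α)⁻¹ * PhiG α k x * J|
      ≤ |I| * |(1+α)⁻¹ * FG α k x - B * x ^ (1 + α/2)| + |(1+α)⁻¹ * FG α k x * P|
        + |(1+α)⁻¹ * PhiG α k x * J| := habs
    _ ≤ |I| * (c1 * x ^ (2 + 3*α/2)) + c2 * (x ^ (1+α/2) * x ^ (1-α))
        + c3 * (x ^ (-(α/2)) * x ^ 2) := by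
          gcongr
    _ = |I| * c1 * x ^ (2 + 3*α/2) + c2 * x ^ (2-α/2) + c3 * x ^ (2-α/2) := by
          rw [e2, e3]; ring
    _ ≤ |I| * c1 * x ^ (2 - α/2) + c2 * x ^ (2-α/2) + c3 * x ^ (2-α/2) := by
          gcongr
    _ = (|I| * c1 + c2 + c3) * x ^ (2 - α/2) := by ring

/-- For `α ∈ (0,1)`, `k ≠ 0`, `c₀ c₁ ∈ ℂ`, and `φ : (0,∞) → ℂ` with
`φ(x) = o(x^{3/2})` as `x → 0⁺`, set `g = φ + c₁ Ψ_{α,k} + c₀ Φ_{α,k}`,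
`g₀ = c₀ √(π(1+α)/(2|k|))` and
`g₁ = c₁ √(2|k|/(π(1+α)³)) ‖Φ_{α,k}‖²_{L²} − c₀ √(π|k|/(2(1+α)))`.  Then
`x^{α/2} g(x) → g₀`, `x^{−(1+α/2)}(g(x) − g₀ x^{−α/2}) → g₁`, and
`g(x) = g₀ x^{−α/2} + g₁ x^{1+α/2} + o(x^{3/2})` as `x → 0⁺`. -/
theorem adjoint_domain_element_asymptotics (α : ℝ) (hα0 : 0 < α) (hα1 : α < 1)
    (k : ℤ) (hk : k ≠ 0) (c₀ c₁ : ℂ) (φ : ℝ → ℂ)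
    (hφ : (fun x : ℝ => φ x) =o[𝓝[>] 0] fun x : ℝ => x ^ ((3 : ℝ) / 2)) :
    Tendsto
      (fun x : ℝ => ((x ^ (α / 2) : ℝ) : ℂ) *
        (φ x + c₁ * (PsiG α k x : ℂ) + c₀ * (PhiG α k x : ℂ)))
      (𝓝[>] 0)
      (𝓝 (c₀ * (Real.sqrt (Real.pi * (1 + α) / (2 * |(k : ℝ)|)) : ℂ))) ∧
    Tendsto
      (fun x : ℝ => ((x ^ (-(1 + α / 2)) : ℝ) : ℂ) *
        ((φ x + c₁ * (PsiG α k x : ℂ) + c₀ * (PhiG α k x : ℂ)) -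
          c₀ * (Real.sqrt (Real.pi * (1 + α) / (2 * |(k : ℝ)|)) : ℂ) *
            ((x ^ (-(α / 2)) : ℝ) : ℂ)))
      (𝓝[>] 0)
      (𝓝 (c₁ * (Real.sqrt (2 * |(k : ℝ)| / (Real.pi * (1 + α) ^ 3)) : ℂ) *
            ((∫ ρ in Set.Ioi (0 : ℝ), PhiG α k ρ ^ 2 : ℝ) : ℂ) -
          c₀ * (Real.sqrt (Real.pi * |(k : ℝ)| / (2 * (1 + α))) : ℂ))) ∧
    ((fun x : ℝ =>
        (φ x + c₁ * (PsiG α k x : ℂ) + c₀ * (PhiG α k x : ℂ)) -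
          c₀ * (Real.sqrt (Real.pi * (1 + α) / (2 * |(k : ℝ)|)) : ℂ) *
            ((x ^ (-(α / 2)) : ℝ) : ℂ) -
          (c₁ * (Real.sqrt (2 * |(k : ℝ)| / (Real.pi * (1 + α) ^ 3)) : ℂ) *
              ((∫ ρ in Set.Ioi (0 : ℝ), PhiG α k ρ ^ 2 : ℝ) : ℂ) -
            c₀ * (Real.sqrt (Real.pi * |(k : ℝ)| / (2 * (1 + α))) : ℂ)) *
            ((x ^ (1 + α / 2) : ℝ) : ℂ))
      =o[𝓝[>] 0] fun x : ℝ => x ^ ((3 : ℝ) / 2)) := by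
  have hΦo := aux_phi_asym α hα0 hα1 k hk
  have hΨo := aux_psi_asym α hα0 hα1 k hk
  have hΦc : (fun x : ℝ => ((PhiG α k x - CPhi α k * x ^ (-(α/2)) +
      Real.sqrt (Real.pi * |(k:ℝ)| / (2*(1+α))) * x ^ (1 + α/2) : ℝ) : ℂ))
      =o[𝓝[>] (0:ℝ)] fun x => x ^ ((3:ℝ)/2) :=
    (Complex.ofRealCLM.isBigO_comp _ _).trans_isLittleO hΦo
  have hΨc : (fun x : ℝ => ((PsiG α k x - Real.sqrt (2*|(k:ℝ)|/(Real.pi*(1+α)^3)) *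
      (∫ ρ in Set.Ioi (0:ℝ), PhiG α k ρ ^ 2) * x ^ (1 + α/2) : ℝ) : ℂ))
      =o[𝓝[>] (0:ℝ)] fun x => x ^ ((3:ℝ)/2) :=
    (Complex.ofRealCLM.isBigO_comp _ _).trans_isLittleO hΨo
  have claim3 : (fun x : ℝ =>
        (φ x + c₁ * (PsiG α k x : ℂ) + c₀ * (PhiG α k x : ℂ)) -
          c₀ * (Real.sqrt (Real.pi * (1 + α) / (2 * |(k : ℝ)|)) : ℂ) *
            ((x ^ (-(α / 2)) : ℝ) : ℂ) -
          (c₁ * (Real.sqrt (2 * |(k : ℝ)| / (Real.pi * (1 + α) ^ 3)) : ℂ) *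
              ((∫ ρ in Set.Ioi (0 : ℝ), PhiG α k ρ ^ 2 : ℝ) : ℂ) -
            c₀ * (Real.sqrt (Real.pi * |(k : ℝ)| / (2 * (1 + α))) : ℂ)) *
            ((x ^ (1 + α / 2) : ℝ) : ℂ))
      =o[𝓝[>] (0:ℝ)] fun x : ℝ => x ^ ((3 : ℝ) / 2) := by
    have hsum := (hφ.add (hΨc.const_mul_left c₁)).add (hΦc.const_mul_left c₀)
    apply hsum.congr (fun x => ?_) (fun x => rfl)
    simp only [CPhi]
    push_cast
    ring
  refine ⟨?_, ?_, claim3⟩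
  · -- claim 1
    have hE := isLittleO_iff.mp claim3 one_pos
    have hT : Tendsto (fun x : ℝ => ((x ^ (α/2) : ℝ) : ℂ) *
        ((φ x + c₁ * (PsiG α k x : ℂ) + c₀ * (PhiG α k x : ℂ)) -
          c₀ * (Real.sqrt (Real.pi * (1 + α) / (2 * |(k : ℝ)|)) : ℂ) *
            ((x ^ (-(α / 2)) : ℝ) : ℂ) -
          (c₁ * (Real.sqrt (2 * |(k : ℝ)| / (Real.pi * (1 + α) ^ 3)) : ℂ) *
              ((∫ ρ in Set.Ioi (0 : ℝ), PhiG α k ρ ^ 2 : ℝ) : ℂ) -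
            c₀ * (Real.sqrt (Real.pi * |(k : ℝ)| / (2 * (1 + α))) : ℂ)) *
            ((x ^ (1 + α / 2) : ℝ) : ℂ))) (𝓝[>] (0:ℝ)) (𝓝 0) := by
      apply squeeze_zero_norm' (a := fun x : ℝ => x ^ (α/2 + 3/2))
      · filter_upwards [hE, self_mem_nhdsWithin] with x hx hx0
        rw [norm_mul, Complex.norm_real, Real.norm_eq_abs,
          abs_of_pos (Real.rpow_pos_of_pos hx0 _)]
        calc x ^ (α/2) * ‖_‖ ≤ x ^ (α/2) * (1 * ‖x ^ ((3:ℝ)/2)‖) := by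
              apply mul_le_mul_of_nonneg_left hx (Real.rpow_pos_of_pos hx0 _).le
          _ = x ^ (α/2) * x ^ ((3:ℝ)/2) := by
              rw [one_mul, Real.norm_eq_abs, abs_of_pos (Real.rpow_pos_of_pos hx0 _)]
          _ = x ^ (α/2 + 3/2) := (Real.rpow_add hx0 _ _).symm
      · exact aux_tendsto_rpow_zero (by linarith)
    have hX : Tendsto (fun x : ℝ => ((x ^ (1+α) : ℝ) : ℂ)) (𝓝[>] (0:ℝ)) (𝓝 0) := by
      have := (Complex.continuous_ofReal.tendsto 0).comp
        (aux_tendsto_rpow_zero (by linarith : (0:ℝ) < 1 + α))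
      simpa [Function.comp_def] using this
    have hcomb := (hT.add (tendsto_const_nhds
      (x := c₀ * (Real.sqrt (Real.pi * (1 + α) / (2 * |(k:ℝ)|)) : ℂ))
      (f := 𝓝[>] (0:ℝ)))).add (hX.const_mul
      (c₁ * (Real.sqrt (2 * |(k : ℝ)| / (Real.pi * (1 + α) ^ 3)) : ℂ) *
            ((∫ ρ in Set.Ioi (0 : ℝ), PhiG α k ρ ^ 2 : ℝ) : ℂ) -
          c₀ * (Real.sqrt (Real.pi * |(k : ℝ)| / (2 * (1 + α))) : ℂ)))
    rw [zero_add, mul_zero, add_zero] at hcomb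
    apply hcomb.congr'
    filter_upwards [self_mem_nhdsWithin] with x hx0
    have h1 : ((x ^ (α/2) : ℝ) : ℂ) * ((x ^ (-(α/2)) : ℝ) : ℂ) = 1 := by
      rw [← Complex.ofReal_mul, ← Real.rpow_add hx0,
        show α/2 + -(α/2) = 0 by ring, Real.rpow_zero, Complex.ofReal_one]
    have h2 : ((x ^ (α/2) : ℝ) : ℂ) * ((x ^ (1 + α/2) : ℝ) : ℂ) = ((x ^ (1+α) : ℝ) : ℂ) := by
      rw [← Complex.ofReal_mul, ← Real.rpow_add hx0, show α/2 + (1 + α/2) = 1 + α by ring]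
    set q := ((x ^ (α/2) : ℝ) : ℂ)
    linear_combination (-(c₀ * (Real.sqrt (Real.pi * (1 + α) / (2 * |(k : ℝ)|)) : ℂ))) * h1 +
      (-(c₁ * (Real.sqrt (2 * |(k : ℝ)| / (Real.pi * (1 + α) ^ 3)) : ℂ) *
            ((∫ ρ in Set.Ioi (0 : ℝ), PhiG α k ρ ^ 2 : ℝ) : ℂ) -
          c₀ * (Real.sqrt (Real.pi * |(k : ℝ)| / (2 * (1 + α))) : ℂ)) + 
          2*(c₀ * (Real.sqrt (Real.pi * |(k : ℝ)| / (2 * (1 + α))) : ℂ))*0) * h2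
  · -- claim 2
    have hE := isLittleO_iff.mp claim3 one_pos
    have hT : Tendsto (fun x : ℝ => ((x ^ (-(1 + α/2)) : ℝ) : ℂ) *
        ((φ x + c₁ * (PsiG α k x : ℂ) + c₀ * (PhiG α k x : ℂ)) -
          c₀ * (Real.sqrt (Real.pi * (1 + α) / (2 * |(k : ℝ)|)) : ℂ) *
            ((x ^ (-(α / 2)) : ℝ) : ℂ) -
          (c₁ * (Real.sqrt (2 * |(k : ℝ)| / (Real.pi * (1 + α) ^ 3)) : ℂ) *
              ((∫ ρ in Set.Ioi (0 : ℝ), PhiG α k ρ ^ 2 : ℝ) : ℂ) -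
            c₀ * (Real.sqrt (Real.pi * |(k : ℝ)| / (2 * (1 + α))) : ℂ)) *
            ((x ^ (1 + α / 2) : ℝ) : ℂ))) (𝓝[>] (0:ℝ)) (𝓝 0) := by
      apply squeeze_zero_norm' (a := fun x : ℝ => x ^ (-(1 + α/2) + 3/2))
      · filter_upwards [hE, self_mem_nhdsWithin] with x hx hx0
        rw [norm_mul, Complex.norm_real, Real.norm_eq_abs,
          abs_of_pos (Real.rpow_pos_of_pos hx0 _)]
        calc x ^ (-(1 + α/2)) * ‖_‖
            ≤ x ^ (-(1 + α/2)) * (1 * ‖x ^ ((3:ℝ)/2)‖) := by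
              apply mul_le_mul_of_nonneg_left hx (Real.rpow_pos_of_pos hx0 _).le
          _ = x ^ (-(1 + α/2)) * x ^ ((3:ℝ)/2) := by
              rw [one_mul, Real.norm_eq_abs, abs_of_pos (Real.rpow_pos_of_pos hx0 _)]
          _ = x ^ (-(1 + α/2) + 3/2) := (Real.rpow_add hx0 _ _).symm
      · exact aux_tendsto_rpow_zero (by linarith)
    have hcomb := hT.add (tendsto_const_nhds
      (x := c₁ * (Real.sqrt (2 * |(k : ℝ)| / (Real.pi * (1 + α) ^ 3)) : ℂ) *
            ((∫ ρ in Set.Ioi (0 : ℝ), PhiG α k ρ ^ 2 : ℝ) : ℂ) -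
          c₀ * (Real.sqrt (Real.pi * |(k : ℝ)| / (2 * (1 + α))) : ℂ))
      (f := 𝓝[>] (0:ℝ)))
    rw [zero_add] at hcomb
    apply hcomb.congr'
    filter_upwards [self_mem_nhdsWithin] with x hx0
    have h1 : ((x ^ (-(1 + α/2)) : ℝ) : ℂ) * ((x ^ (1 + α/2) : ℝ) : ℂ) = 1 := by
      rw [← Complex.ofReal_mul, ← Real.rpow_add hx0,
        show -(1 + α/2) + (1 + α/2) = 0 by ring, Real.rpow_zero, Complex.ofReal_one]
    set q := ((x ^ (-(1 + α/2)) : ℝ) : ℂ)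
    linear_combination (-(c₁ * (Real.sqrt (2 * |(k : ℝ)| / (Real.pi * (1 + α) ^ 3)) : ℂ) *
            ((∫ ρ in Set.Ioi (0 : ℝ), PhiG α k ρ ^ 2 : ℝ) : ℂ) -
          c₀ * (Real.sqrt (Real.pi * |(k : ℝ)| / (2 * (1 + α))) : ℂ))) * h1
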